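/- Let H be an N×N complex Hadamard matrix and p ≥ 1. For a, b ∈ {1,…,N} and multi-indices i = (i₁,…,i_p), j = (j₁,…,j_p) ∈ {1,…,N}^p, define w_{ab}(i,j) = N^{−p} · Σ_{a₁,…,a_{p−1}} Π_{s=1}^{p} H_{i_s a_{s−1}} H_{j_s a_s} · conj(H_{i_s a_s} H_{j_s a_{s−1}}), where a₀ = a and a_p = b. Then: (1) for all a, b, i, j one has Σ_{k ∈ {1,…,N}^p} w_{ab}(i,k)·w_{ab}(k,j) = w_{ab}(i,j) (idempotency); and (2) for all b, i, j one has Σ_{a=1}^{N} w_{ab}(i,j) = δ_{i₁j₁}·δ_{i₂j₂}⋯δ_{i_pj_p} (sum-one condition). -/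

import Mathlib

open Matrix BigOperators ComplexConjugate

/-- `H` is a complex Hadamard matrix. -/
def IsHadamard {I : Type*} [Fintype I] [DecidableEq I] (H : Matrix I I ℂ) : Prop :=
  (∀ i j, ‖H i j‖ = 1) ∧
  (∀ i j, ∑ k, H i k * conj (H j k) = if i = j then (Fintype.card I : ℂ) else 0)

/-- The quantity `w_{ab}(i,j) = N^{-p}·∑_{a₁…a_{p−1}} ∏_{s=1}^p
H_{i_s a_{s−1}}·H_{j_s a_s}·conj(H_{i_s a_s}·H_{j_s a_{s−1}})`, with `a₀ = a`, `a_p = b`.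
The sum over the interior indices is implemented as a sum over all paths
`c : Fin (p+1) → Fin N` with `c 0 = a` and `c p = b`. -/
noncomputable def wCoef (N : ℕ) (H : Matrix (Fin N) (Fin N) ℂ) (p : ℕ)
    (a b : Fin N) (i j : Fin p → Fin N) : ℂ :=
  ((N : ℂ) ^ p)⁻¹ * ∑ c : Fin (p + 1) → Fin N,
    if c 0 = a ∧ c (Fin.last p) = b then
      ∏ s : Fin p,
        H (i s) (c s.castSucc) * H (j s) (c s.succ) *
          conj (H (i s) (c s.succ) * H (j s) (c s.castSucc))
    else 0

namespace WAux

noncomputable def Fac {N : ℕ} (H : Matrix (Fin N) (Fin N) ℂ) (x y u v : Fin N) : ℂ :=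
  H x u * H y v * conj (H x v * H y u)

variable {N : ℕ} {H : Matrix (Fin N) (Fin N) ℂ}

lemma sum_pi_succ {β : Type*} [Fintype β] (n : ℕ) (f : (Fin (n+1) → β) → ℂ) :
    ∑ c : Fin (n+1) → β, f c = ∑ m : β, ∑ t : Fin n → β, f (Fin.cons m t) := by
  rw [← (Fin.consEquiv (fun _ : Fin (n+1) => β)).sum_comp, Fintype.sum_prod_type]
  rfl

lemma wCoef_zero (a b : Fin N) (i j : Fin 0 → Fin N) :
    wCoef N H 0 a b i j = if a = b then 1 else 0 := by
  rw [wCoef, sum_pi_succ]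
  have huniq : ∀ m : Fin N, ∑ t : Fin 0 → Fin N,
      (if (Fin.cons m t : Fin 1 → Fin N) 0 = a ∧
          (Fin.cons m t : Fin 1 → Fin N) (Fin.last 0) = b then
        ∏ s : Fin 0, H (i s) ((Fin.cons m t : Fin 1 → Fin N) s.castSucc) *
          H (j s) ((Fin.cons m t : Fin 1 → Fin N) s.succ) *
          conj (H (i s) ((Fin.cons m t : Fin 1 → Fin N) s.succ) *
            H (j s) ((Fin.cons m t : Fin 1 → Fin N) s.castSucc))
      else 0) = if m = a ∧ m = b then 1 else 0 := by
    intro m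
    rw [Fintype.sum_unique]
    have : (Fin.last 0 : Fin 1) = 0 := rfl
    rw [this]
    simp
  simp only [huniq]
  simp [ite_and, Finset.sum_ite_eq']

lemma wCoef_eq (p : ℕ) (a b : Fin N) (i j : Fin p → Fin N) :
    wCoef N H p a b i j = ((N : ℂ) ^ p)⁻¹ * ∑ c : Fin (p + 1) → Fin N,
      if c 0 = a ∧ c (Fin.last p) = b then
        ∏ s : Fin p, Fac H (i s) (j s) (c s.castSucc) (c s.succ) else 0 := rfl

lemma wCoef_succ (p : ℕ) (a b : Fin N) (i j : Fin (p+1) → Fin N) :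
    wCoef N H (p+1) a b i j =
      ∑ m, (N:ℂ)⁻¹ * Fac H (i 0) (j 0) a m *
        wCoef N H p m b (fun s => i s.succ) (fun s => j s.succ) := by
  rw [wCoef_eq, sum_pi_succ]
  have hprod : ∀ (m : Fin N) (t : Fin (p+1) → Fin N),
      (∏ s : Fin (p+1), Fac H (i s) (j s) ((Fin.cons m t : Fin (p+2) → Fin N) s.castSucc)
        ((Fin.cons m t : Fin (p+2) → Fin N) s.succ))
      = Fac H (i 0) (j 0) m (t 0) *
        ∏ s : Fin p, Fac H (i s.succ) (j s.succ) (t s.castSucc) (t s.succ) := by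
    intro m t
    rw [Fin.prod_univ_succ]
    congr 1
  have hcond : ∀ (m : Fin N) (t : Fin (p+1) → Fin N),
      ((Fin.cons m t : Fin (p+2) → Fin N) 0 = a ∧
        (Fin.cons m t : Fin (p+2) → Fin N) (Fin.last (p+1)) = b)
      ↔ (m = a ∧ t (Fin.last p) = b) := by
    intro m t
    have h1 : (Fin.cons m t : Fin (p+2) → Fin N) 0 = m := rfl
    have h2 : (Fin.cons m t : Fin (p+2) → Fin N) (Fin.last (p+1)) = t (Fin.last p) := by
      have h0 : (Fin.last (p+1) : Fin (p+2)) = (Fin.last p).succ := (Fin.succ_last p).symm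
      rw [h0, Fin.cons_succ]
    rw [h1, h2]
  calc ((N : ℂ) ^ (p+1))⁻¹ * ∑ m, ∑ t : Fin (p+1) → Fin N,
        (if (Fin.cons m t : Fin (p+2) → Fin N) 0 = a ∧
            (Fin.cons m t : Fin (p+2) → Fin N) (Fin.last (p+1)) = b then
          ∏ s : Fin (p+1), Fac H (i s) (j s)
            ((Fin.cons m t : Fin (p+2) → Fin N) s.castSucc)
            ((Fin.cons m t : Fin (p+2) → Fin N) s.succ) else 0)
      = ((N : ℂ) ^ (p+1))⁻¹ * ∑ m, ∑ t : Fin (p+1) → Fin N,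
        (if m = a ∧ t (Fin.last p) = b then
          Fac H (i 0) (j 0) m (t 0) *
            ∏ s : Fin p, Fac H (i s.succ) (j s.succ) (t s.castSucc) (t s.succ) else 0) := by
        congr 1
        refine Finset.sum_congr rfl fun m _ => Finset.sum_congr rfl fun t _ => ?_
        rw [hprod]
        exact if_congr (hcond m t) rfl rfl
    _ = ((N : ℂ) ^ (p+1))⁻¹ * ∑ t : Fin (p+1) → Fin N,
        (if t (Fin.last p) = b then
          Fac H (i 0) (j 0) a (t 0) *
            ∏ s : Fin p, Fac H (i s.succ) (j s.succ) (t s.castSucc) (t s.succ) else 0) := by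
        congr 1
        rw [Finset.sum_comm]
        refine Finset.sum_congr rfl fun t _ => ?_
        simp only [ite_and]
        rw [Finset.sum_ite_eq' Finset.univ a]
        simp
    _ = ((N : ℂ) ^ (p+1))⁻¹ * ∑ t : Fin (p+1) → Fin N, ∑ m,
        (if t 0 = m ∧ t (Fin.last p) = b then
          Fac H (i 0) (j 0) a m *
            ∏ s : Fin p, Fac H (i s.succ) (j s.succ) (t s.castSucc) (t s.succ) else 0) := by
        congr 1
        refine Finset.sum_congr rfl fun t _ => ?_
        simp only [ite_and]
        rw [Finset.sum_ite_eq Finset.univ (t 0)]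
        simp
    _ = _ := by
        rw [Finset.sum_comm, Finset.mul_sum]
        refine Finset.sum_congr rfl fun m _ => ?_
        rw [wCoef_eq]
        have hS : ∀ (X : ℂ), (∑ t : Fin (p+1) → Fin N,
            if t 0 = m ∧ t (Fin.last p) = b then
              X * ∏ s : Fin p, Fac H (i s.succ) (j s.succ) (t s.castSucc) (t s.succ) else 0)
            = X * ∑ t : Fin (p+1) → Fin N,
            (if t 0 = m ∧ t (Fin.last p) = b then
              ∏ s : Fin p, Fac H (i s.succ) (j s.succ) (t s.castSucc) (t s.succ) else 0) :=
          fun X => by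
            rw [Finset.mul_sum]
            exact Finset.sum_congr rfl fun t _ => by split_ifs <;> simp
        rw [hS, pow_succ, mul_inv]
        ring

section Had

lemma mod_one (hH : _root_.IsHadamard H) (x v : Fin N) : H x v * conj (H x v) = 1 := by
  rw [Complex.mul_conj, Complex.normSq_eq_norm_sq, hH.1]
  norm_num

lemma col_orth (hH : _root_.IsHadamard H) (hN : (N:ℂ) ≠ 0) (u v : Fin N) :
    ∑ k, conj (H k u) * H k v = if u = v then (N:ℂ) else 0 := by
  have h1 : H * ((N:ℂ)⁻¹ • Hᴴ) = 1 := by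
    ext x y
    simp only [Matrix.mul_apply, Matrix.smul_apply, Matrix.conjTranspose_apply, smul_eq_mul,
      Matrix.one_apply]
    calc ∑ k, H x k * ((N:ℂ)⁻¹ * (starRingEnd ℂ) (H y k))
        = (N:ℂ)⁻¹ * ∑ k, H x k * conj (H y k) := by
          rw [Finset.mul_sum]; exact Finset.sum_congr rfl fun k _ => by ring
      _ = _ := by
          rw [hH.2]
          split_ifs
          · simp [Fintype.card_fin, inv_mul_cancel₀ hN]
          · simp
  have h2 := mul_eq_one_comm.mp h1
  have h3 := congrFun (congrFun h2 u) v
  simp only [Matrix.mul_apply, Matrix.smul_apply, Matrix.conjTranspose_apply, smul_eq_mul,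
    Matrix.one_apply, Complex.star_def] at h3
  have h4 : (N:ℂ)⁻¹ * ∑ k, conj (H k u) * H k v = if u = v then 1 else 0 := by
    rw [Finset.mul_sum]
    rw [← h3]
    exact Finset.sum_congr rfl fun k _ => by ring
  have := congrArg (fun z => (N:ℂ) * z) h4
  rw [← mul_assoc, mul_inv_cancel₀ hN, one_mul] at this
  rw [this]
  split_ifs <;> simp

lemma sum_Fac_left (hH : _root_.IsHadamard H) (x y m : Fin N) :
    ∑ a, Fac H x y a m = if x = y then (N:ℂ) else 0 := by
  have : ∀ a, Fac H x y a m = (H x a * conj (H y a)) * (H y m * conj (H x m)) := by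
    intro a; simp only [Fac, _root_.map_mul]; ring
  simp only [this]
  rw [← Finset.sum_mul, hH.2]
  split_ifs with h
  · subst h
    rw [Fintype.card_fin, mod_one hH]
    ring
  · simp

lemma sum_Fac_mid (hH : _root_.IsHadamard H) (hN : (N:ℂ) ≠ 0) (x y u u' m : Fin N) :
    ∑ k, Fac H x k u m * Fac H k y u' m =
      if u = u' then (N:ℂ) * Fac H x y u m else 0 := by
  have : ∀ k, Fac H x k u m * Fac H k y u' m =
      (H x u * conj (H x m) * H y m * conj (H y u')) * (H k m * conj (H k m)) *
        (conj (H k u) * H k u') := by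
    intro k; simp only [Fac, _root_.map_mul]; ring
  simp only [this, mod_one hH, mul_one]
  rw [← Finset.mul_sum, col_orth hH hN]
  split_ifs with h
  · subst h
    simp only [Fac, _root_.map_mul]
    ring
  · simp

lemma sum_one (hH : _root_.IsHadamard H) (hN : (N:ℂ) ≠ 0) (p : ℕ) (b : Fin N) (i j : Fin p → Fin N) :
    ∑ a, wCoef N H p a b i j = ∏ s : Fin p, if i s = j s then (1 : ℂ) else 0 := by
  induction p with
  | zero =>
    simp [wCoef_zero, Finset.sum_ite_eq']
  | succ p ih =>
    simp only [wCoef_succ]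
    rw [Finset.sum_comm]
    have : ∀ m, ∑ a, (N:ℂ)⁻¹ * Fac H (i 0) (j 0) a m *
        wCoef N H p m b (fun s => i s.succ) (fun s => j s.succ)
        = (if i 0 = j 0 then (1:ℂ) else 0) *
          wCoef N H p m b (fun s => i s.succ) (fun s => j s.succ) := by
      intro m
      have : ∑ a, (N:ℂ)⁻¹ * Fac H (i 0) (j 0) a m *
          wCoef N H p m b (fun s => i s.succ) (fun s => j s.succ)
          = (N:ℂ)⁻¹ * (∑ a, Fac H (i 0) (j 0) a m) *
            wCoef N H p m b (fun s => i s.succ) (fun s => j s.succ) := by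
        rw [Finset.mul_sum, Finset.sum_mul]
      rw [this, sum_Fac_left hH]
      split_ifs
      · rw [inv_mul_cancel₀ hN, one_mul]
      · simp
    simp only [this]
    rw [← Finset.mul_sum, ih, Fin.prod_univ_succ]

lemma key (hH : _root_.IsHadamard H) (hN : (N:ℂ) ≠ 0) (p : ℕ) (b u u' : Fin N) (i j : Fin p → Fin N) :
    ∑ k : Fin p → Fin N, wCoef N H p u b i k * wCoef N H p u' b k j =
      if u = u' then wCoef N H p u b i j else 0 := by
  induction p generalizing b u u' with
  | zero =>
    rw [Fintype.sum_unique]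
    simp only [wCoef_zero]
    split_ifs <;> simp_all
  | succ p ih =>
    rw [sum_pi_succ p (fun k => wCoef N H (p+1) u b i k * wCoef N H (p+1) u' b k j)]
    have hterm : ∀ (k0 : Fin N) (kt : Fin p → Fin N),
        wCoef N H (p+1) u b i (Fin.cons k0 kt) * wCoef N H (p+1) u' b (Fin.cons k0 kt) j
        = (∑ m, (N:ℂ)⁻¹ * Fac H (i 0) k0 u m *
            wCoef N H p m b (fun s => i s.succ) kt) *
          (∑ m', (N:ℂ)⁻¹ * Fac H k0 (j 0) u' m' *
            wCoef N H p m' b kt (fun s => j s.succ)) := by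
      intro k0 kt
      rw [wCoef_succ, wCoef_succ]
      simp [Fin.cons_zero, Fin.cons_succ]
    simp only [hterm]
    -- For each k0, compute the inner sum over kt.
    have hinner : ∀ k0 : Fin N,
        ∑ kt : Fin p → Fin N,
          (∑ m, (N:ℂ)⁻¹ * Fac H (i 0) k0 u m * wCoef N H p m b (fun s => i s.succ) kt) *
          (∑ m', (N:ℂ)⁻¹ * Fac H k0 (j 0) u' m' * wCoef N H p m' b kt (fun s => j s.succ))
        = ∑ m, ((N:ℂ)⁻¹ * Fac H (i 0) k0 u m) * ((N:ℂ)⁻¹ * Fac H k0 (j 0) u' m) *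
            wCoef N H p m b (fun s => i s.succ) (fun s => j s.succ) := by
      intro k0
      calc ∑ kt : Fin p → Fin N,
            (∑ m, (N:ℂ)⁻¹ * Fac H (i 0) k0 u m * wCoef N H p m b (fun s => i s.succ) kt) *
            (∑ m', (N:ℂ)⁻¹ * Fac H k0 (j 0) u' m' * wCoef N H p m' b kt (fun s => j s.succ))
          = ∑ kt : Fin p → Fin N, ∑ m, ∑ m',
              ((N:ℂ)⁻¹ * Fac H (i 0) k0 u m) * ((N:ℂ)⁻¹ * Fac H k0 (j 0) u' m') *
              (wCoef N H p m b (fun s => i s.succ) kt *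
                wCoef N H p m' b kt (fun s => j s.succ)) := by
            refine Finset.sum_congr rfl fun kt _ => ?_
            rw [Finset.sum_mul_sum]
            exact Finset.sum_congr rfl fun m _ => Finset.sum_congr rfl fun m' _ => by ring
        _ = ∑ m, ∑ m',
              ((N:ℂ)⁻¹ * Fac H (i 0) k0 u m) * ((N:ℂ)⁻¹ * Fac H k0 (j 0) u' m') *
              ∑ kt : Fin p → Fin N, (wCoef N H p m b (fun s => i s.succ) kt *
                wCoef N H p m' b kt (fun s => j s.succ)) := by
            rw [Finset.sum_comm]
            refine Finset.sum_congr rfl fun m _ => ?_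
            rw [Finset.sum_comm]
            exact Finset.sum_congr rfl fun m' _ => (Finset.mul_sum _ _ _).symm
        _ = _ := by
            refine Finset.sum_congr rfl fun m _ => ?_
            simp only [ih]
            simp only [mul_ite, mul_zero]
            rw [Finset.sum_ite_eq Finset.univ m]
            simp
    simp only [hinner]
    rw [Finset.sum_comm]
    have hcol : ∀ m : Fin N,
        ∑ k0, ((N:ℂ)⁻¹ * Fac H (i 0) k0 u m) * ((N:ℂ)⁻¹ * Fac H k0 (j 0) u' m) *
          wCoef N H p m b (fun s => i s.succ) (fun s => j s.succ)
        = (if u = u' then (N:ℂ)⁻¹ * Fac H (i 0) (j 0) u m else 0) *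
          wCoef N H p m b (fun s => i s.succ) (fun s => j s.succ) := by
      intro m
      rw [← Finset.sum_mul]
      congr 1
      have : ∑ k0, ((N:ℂ)⁻¹ * Fac H (i 0) k0 u m) * ((N:ℂ)⁻¹ * Fac H k0 (j 0) u' m)
          = (N:ℂ)⁻¹ * (N:ℂ)⁻¹ * ∑ k0, Fac H (i 0) k0 u m * Fac H k0 (j 0) u' m := by
        rw [Finset.mul_sum]
        exact Finset.sum_congr rfl fun k0 _ => by ring
      rw [this, sum_Fac_mid hH hN]
      split_ifs
      · rw [← mul_assoc]
        rw [mul_assoc ((N:ℂ)⁻¹)]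
        rw [inv_mul_cancel₀ hN]
        ring
      · simp
    simp only [hcol]
    split_ifs with h
    · subst h
      rw [← wCoef_succ]
    · simp

end Had

end WAux

/-- for a complex Hadamard matrix `H` and `p ≥ 1`, the coefficients
`w_{ab}(i,j)` satisfy: (1) the idempotency relation
`∑_{k∈{1,…,N}^p} w_{ab}(i,k)·w_{ab}(k,j) = w_{ab}(i,j)`; and (2) the sum-one condition
`∑_a w_{ab}(i,j) = δ_{i₁j₁}⋯δ_{i_pj_p}`. -/
theorem wCoef_magic (N : ℕ) (hN : 1 ≤ N) (p : ℕ) (hp : 1 ≤ p)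
    (H : Matrix (Fin N) (Fin N) ℂ) (hH : _root_.IsHadamard H) :
    (∀ (a b : Fin N) (i j : Fin p → Fin N),
      ∑ k : Fin p → Fin N, wCoef N H p a b i k * wCoef N H p a b k j =
        wCoef N H p a b i j) ∧
    (∀ (b : Fin N) (i j : Fin p → Fin N),
      ∑ a : Fin N, wCoef N H p a b i j =
        ∏ s : Fin p, if i s = j s then (1 : ℂ) else 0) := by
  have hN' : (N:ℂ) ≠ 0 := by
    exact_mod_cast Nat.cast_ne_zero.mpr (by omega)
  constructor
  · intro a b i j
    have := WAux.key hH hN' p b a a i j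
    simpa using this
  · intro b i j
    exact WAux.sum_one hH hN' p b i j
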